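/- There do not exist invertible $2\times 2$ complex matrices $V_1, V_2, U_1, U_2$ satisfying the six relations $V_1V_2 = V_2V_1$, $U_1U_2 = U_2U_1$, $-U_1V_1 = V_1U_1$, $U_1V_2 = V_2U_1$, $U_2V_1 = V_1U_2$, and $-U_2V_2 = V_2U_2$. (Consequently, in the paper's construction on $\check{T}^4$ the set $\mathcal{U}$ of transition matrices for $(r,A) = (2, I_2)$ is empty, so no holomorphic vector bundle $E_{(r,A,\mu,\mathcal{U})}$ with $(r,A) = (2,I_2)$ exists on $\check{T}^4$.) -/

import Mathlib

open Matrix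

/-- If `-(B*A) = A*B` with `B` invertible, then `A` is traceless. -/
lemma aux_trace_zero (A B : Matrix (Fin 2) (Fin 2) ℂ) (hB : IsUnit B.det)
    (h : -(B * A) = A * B) : A.trace = 0 := by
  have key : A.trace = -A.trace := by
    calc A.trace = (A * (B * B⁻¹)).trace := by
          rw [Matrix.mul_nonsing_inv _ hB, Matrix.mul_one]
      _ = ((A * B) * B⁻¹).trace := by rw [Matrix.mul_assoc]
      _ = (-(B * A) * B⁻¹).trace := by rw [h]
      _ = -((B * (A * B⁻¹)).trace) := by
          rw [Matrix.neg_mul, Matrix.trace_neg, Matrix.mul_assoc]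
      _ = -(((A * B⁻¹) * B).trace) := by rw [Matrix.trace_mul_comm]
      _ = -A.trace := by
          rw [Matrix.mul_assoc, Matrix.nonsing_inv_mul _ hB, Matrix.mul_one]
  linear_combination key / 2

/-- Remark 2.1: there are no invertible `2×2` complex matrices `V₁, V₂, U₁, U₂`
satisfying the cocycle relations for `(r,A) = (2, I₂)` on `Ť⁴`. -/
theorem stmt12 :
    ¬ ∃ (V₁ V₂ U₁ U₂ : Matrix (Fin 2) (Fin 2) ℂ),
      IsUnit V₁.det ∧ IsUnit V₂.det ∧ IsUnit U₁.det ∧ IsUnit U₂.det ∧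
      V₁ * V₂ = V₂ * V₁ ∧ U₁ * U₂ = U₂ * U₁ ∧
      -(U₁ * V₁) = V₁ * U₁ ∧ U₁ * V₂ = V₂ * U₁ ∧
      U₂ * V₁ = V₁ * U₂ ∧ -(U₂ * V₂) = V₂ * U₂ := by
  rintro ⟨V₁, V₂, U₁, U₂, hV₁, hV₂, hU₁, hU₂, h12, hu12, hA1, hC1, hC2, hA2⟩
  -- traces vanish
  have htr1 : V₁.trace = 0 := aux_trace_zero V₁ U₁ hU₁ hA1
  have htr2 : V₂.trace = 0 := aux_trace_zero V₂ U₂ hU₂ hA2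
  have e1 : V₁ 1 1 = -(V₁ 0 0) := by
    have := Matrix.trace_fin_two V₁; rw [htr1] at this; linear_combination -this
  have e2 : V₂ 1 1 = -(V₂ 0 0) := by
    have := Matrix.trace_fin_two V₂; rw [htr2] at this; linear_combination -this
  have hdet1ne : V₁ 0 0 * V₁ 0 0 + V₁ 0 1 * V₁ 1 0 ≠ 0 := by
    intro h
    apply hV₁.ne_zero
    rw [Matrix.det_fin_two, e1]
    linear_combination -h
  -- entry equations of V₁ V₂ = V₂ V₁
  have c00 : V₁ 0 1 * V₂ 1 0 = V₂ 0 1 * V₁ 1 0 := by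
    have h := congrFun (congrFun h12 0) 0
    simp only [Matrix.mul_apply, Fin.sum_univ_two] at h
    linear_combination h
  have c01 : V₁ 0 0 * V₂ 0 1 = V₁ 0 1 * V₂ 0 0 := by
    have h := congrFun (congrFun h12 0) 1
    simp only [Matrix.mul_apply, Fin.sum_univ_two] at h
    rw [e1, e2] at h
    linear_combination h / 2
  have c10 : V₁ 1 0 * V₂ 0 0 = V₁ 0 0 * V₂ 1 0 := by
    have h := congrFun (congrFun h12 1) 0
    simp only [Matrix.mul_apply, Fin.sum_univ_two] at h
    rw [e1, e2] at h
    linear_combination h / 2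
  -- V₂ is a scalar multiple of V₁
  have key : ∃ b : ℂ, V₂ = b • V₁ := by
    by_cases hp : V₁ 0 0 = 0
    · have hq : V₁ 0 1 ≠ 0 := by
        intro h
        exact hdet1ne (by rw [hp, h]; ring)
      have hs0 : V₂ 0 0 = 0 := by
        have := c01
        rw [hp] at this
        rcases mul_eq_zero.mp (by linear_combination -this :
            V₁ 0 1 * V₂ 0 0 = 0) with h | h
        · exact absurd h hq
        · exact h
      refine ⟨V₂ 0 1 / V₁ 0 1, ?_⟩
      ext i j
      fin_cases i <;> fin_cases j <;>
        simp only [Fin.mk_zero, Fin.mk_one, Matrix.smul_apply, smul_eq_mul]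
      · rw [hs0, hp]; ring
      · field_simp
      · field_simp; linear_combination c00
      · rw [e1, e2, hs0, hp]; ring
    · refine ⟨V₂ 0 0 / V₁ 0 0, ?_⟩
      ext i j
      fin_cases i <;> fin_cases j <;>
        simp only [Fin.mk_zero, Fin.mk_one, Matrix.smul_apply, smul_eq_mul]
      · field_simp
      · field_simp; linear_combination c01
      · field_simp; linear_combination -c10
      · rw [e1, e2]; field_simp
  obtain ⟨b, hb⟩ := key
  have hbne : b ≠ 0 := by
    intro h
    apply hV₂.ne_zero
    rw [hb, h, zero_smul, Matrix.det_zero]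
  -- U₁ commutes with V₂ = b • V₁, hence with V₁
  have hcomm : U₁ * V₁ = V₁ * U₁ := by
    have h := hC1
    rw [hb, Matrix.mul_smul, Matrix.smul_mul] at h
    exact smul_right_injective _ hbne h
  have hzero : U₁ * V₁ = 0 := by
    have hsum : (U₁ * V₁) + (U₁ * V₁) = 0 := by
      have h := hA1
      rw [hcomm] at h
      rw [hcomm]
      nth_rewrite 1 [← h]
      exact neg_add_cancel _
    have h2 : (2 : ℂ) • (U₁ * V₁) = 0 := by
      rw [two_smul]; exact hsum
    rcases smul_eq_zero.mp h2 with h | h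
    · exact absurd h two_ne_zero
    · exact h
  have hmul : U₁.det * V₁.det = 0 := by
    rw [← Matrix.det_mul, hzero, Matrix.det_zero]
  rcases mul_eq_zero.mp hmul with h | h
  · exact hU₁.ne_zero h
  · exact hV₁.ne_zero h
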